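/- Let (V, ω) be a finite-dimensional real symplectic vector space, J an ω-compatible complex structure, and g(x, y) = ω(x, Jy) the associated inner product. Fix a nonzero vector v ∈ V and a real number λ > 0, and define J′ : V → V as the linear map with J′w = λ·Jw for w ∈ ℝ·v, J′w = λ⁻¹·Jw for w ∈ ℝ·(Jv), and J′w = Jw for w in the g-orthogonal complement of span{v, Jv}. Then J′ is again an ω-compatible complex structure on V: J′ ∘ J′ = −id, ω(J′x, J′y) = ω(x, y) for all x, y ∈ V, and ω(x, J′x) > 0 for all x ≠ 0. -/

import Mathlib

/-- **Rescaling a compatible complex structure along a symplectic plane.**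
Let `(V, ω)` be a finite-dimensional real symplectic vector space, `J` an
`ω`-compatible complex structure, `g(x,y) = ω(x, Jy)` the associated inner
product, `v ≠ 0` and `λ > 0`.  If `J' : V → V` is the linear map with
`J'v = λ·Jv`, `J'(Jv) = λ⁻¹·J(Jv)`, and `J'w = Jw` for `w` in the
`g`-orthogonal complement of `span{v, Jv}` (i.e. `g(v,w) = g(Jv,w) = 0`),
then `J'` is again `ω`-compatible: `J'² = −id`, `ω(J'x, J'y) = ω(x, y)`,
and `ω(x, J'x) > 0` for `x ≠ 0`. -/
theorem stmt_11 {V : Type*} [AddCommGroup V] [Module ℝ V] [FiniteDimensional ℝ V]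
    (ω : V →ₗ[ℝ] V →ₗ[ℝ] ℝ)
    (halt : ∀ x, ω x x = 0)
    (hnd : ∀ x, (∀ y, ω x y = 0) → x = 0)
    (J : V →ₗ[ℝ] V)
    (hJsq : ∀ x, J (J x) = -x)
    (hJinv : ∀ x y, ω (J x) (J y) = ω x y)
    (hJpos : ∀ x, x ≠ 0 → 0 < ω x (J x))
    (v : V) (hv : v ≠ 0) (lam : ℝ) (hlam : 0 < lam)
    (J' : V →ₗ[ℝ] V)
    (hv' : J' v = lam • J v)
    (hJv' : J' (J v) = lam⁻¹ • J (J v))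
    (horth : ∀ w : V, ω v (J w) = 0 → ω (J v) (J w) = 0 → J' w = J w) :
    (∀ x, J' (J' x) = -x) ∧
    (∀ x y, ω (J' x) (J' y) = ω x y) ∧
    (∀ x, x ≠ 0 → 0 < ω x (J' x)) := by
  have hanti : ∀ x y, ω x y = -ω y x := by
    intro x y
    have h := halt (x + y)
    simp only [map_add, LinearMap.add_apply, halt] at h
    linarith
  have hgsymm : ∀ x y, ω x (J y) = ω y (J x) := by
    intro x y
    have h1 : ω (J x) (J (J y)) = ω x (J y) := hJinv x (J y)
    rw [hJsq] at h1
    simp only [map_neg] at h1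
    rw [← h1, hanti (J x) y, neg_neg]
  have hvv : 0 < ω v (J v) := hJpos v hv
  have hvJJv : ω v (J (J v)) = 0 := by rw [hJsq]; simp [halt]
  -- decomposition
  have decomp : ∀ x : V, ∃ a b : ℝ, ∃ w : V,
      x = a • v + b • J v + w ∧ ω v (J w) = 0 ∧ ω v w = 0 := by
    intro x
    refine ⟨ω x (J v) / ω v (J v), -(ω x v) / ω v (J v),
      x - (ω x (J v) / ω v (J v)) • v - (-(ω x v) / ω v (J v)) • J v, by abel, ?_, ?_⟩
    · simp only [map_sub, map_smul, smul_eq_mul, hvJJv, mul_zero, sub_zero]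
      rw [hgsymm x v]
      field_simp
      ring
    · simp only [map_sub, map_smul, smul_eq_mul, halt, mul_zero, sub_zero]
      field_simp
      rw [hanti v x]
      ring
  -- facts about orthogonal vectors
  have hOJ' : ∀ w : V, ω v (J w) = 0 → ω v w = 0 → J' w = J w := by
    intro w h1 h2
    exact horth w h1 (by rw [hJinv]; exact h2)
  have hOJw : ∀ w : V, ω v (J w) = 0 → ω v w = 0 →
      (ω v (J (J w)) = 0 ∧ ω v (J w) = 0) := by
    intro w h1 h2
    refine ⟨?_, h1⟩
    rw [hJsq]
    simp [h2]
  -- J' on a decomposed vector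
  have hJ'x : ∀ (a b : ℝ) (w : V), ω v (J w) = 0 → ω v w = 0 →
      J' (a • v + b • J v + w) = (a * lam) • J v + (-(b * lam⁻¹)) • v + J w := by
    intro a b w h1 h2
    rw [map_add, map_add, map_smul, map_smul, hv', hJv', hOJ' w h1 h2, hJsq]
    rw [smul_smul, smul_smul, smul_neg]
    rw [neg_smul]
  constructor
  · -- involution
    intro x
    obtain ⟨a, b, w, hx, h1, h2⟩ := decomp x
    obtain ⟨h1', h2'⟩ := hOJw w h1 h2
    rw [hx, hJ'x a b w h1 h2]
    have : (a * lam) • J v + (-(b * lam⁻¹)) • v + J w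
        = (-(b * lam⁻¹)) • v + (a * lam) • J v + J w := by abel
    rw [this, hJ'x _ _ _ h1' h2', hJsq]
    have e1 : -(b * lam⁻¹) * lam = -b := by field_simp
    have e2 : a * lam * lam⁻¹ = a := by field_simp
    rw [e1, e2]
    module
  have hinv2 : ∀ x y, ω (J' x) (J' y) = ω x y := by
    intro x y
    obtain ⟨a, b, w, hx, h1, h2⟩ := decomp x
    obtain ⟨c, d, u, hy, k1, k2⟩ := decomp y
    -- zero facts
    have hwJv : ω w (J v) = 0 := by rw [hgsymm]; exact h1
    have huJv : ω u (J v) = 0 := by rw [hgsymm]; exact k1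
    have hwv : ω w v = 0 := by rw [hanti]; simp [h2]
    have huv : ω u v = 0 := by rw [hanti]; simp [k2]
    rw [hx, hy, hJ'x a b w h1 h2, hJ'x c d u k1 k2]
    simp only [map_add, map_smul, LinearMap.add_apply, LinearMap.smul_apply, smul_eq_mul,
      map_neg, LinearMap.neg_apply]
    have hA : ω (J v) (J v) = 0 := halt _
    have hB : ω (J v) v = -ω v (J v) := by rw [hanti]
    have hC : ω (J v) (J u) = 0 := by rw [hJinv]; exact k2
    have hE : ω (J w) (J v) = 0 := by rw [hJinv]; exact hwv
    have hF : ω (J w) v = 0 := by rw [hanti]; simp [h1]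
    have hG : ω (J w) (J u) = ω w u := hJinv w u
    have hH : ω (J v) u = 0 := by rw [hanti]; simp [huJv]
    rw [hA, hB, hC, hE, hF, hG, hH, k1, halt v, k2, hwv, hwJv]
    field_simp
    ring
  refine ⟨hinv2, ?_⟩
  intro x hx0
  obtain ⟨a, b, w, hx, h1, h2⟩ := decomp x
  have hwJv : ω w (J v) = 0 := by rw [hgsymm]; exact h1
  have hwv : ω w v = 0 := by rw [hanti]; simp [h2]
  have hwJw : 0 ≤ ω w (J w) := by
    by_cases hw : w = 0
    · simp [hw]
    · exact le_of_lt (hJpos w hw)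
  have hne : a ≠ 0 ∨ b ≠ 0 ∨ w ≠ 0 := by
    by_contra h
    push_neg at h
    obtain ⟨ha, hb, hw⟩ := h
    apply hx0
    rw [hx, ha, hb, hw]
    simp
  rw [hx, hJ'x a b w h1 h2]
  have hA : ω (J v) (J v) = 0 := halt _
  have hB : ω (J v) v = -ω v (J v) := by rw [hanti]
  have hC : ω (J v) (J w) = 0 := by rw [hJinv]; exact h2
  simp only [map_add, map_smul, LinearMap.add_apply, LinearMap.smul_apply, smul_eq_mul,
    map_neg, LinearMap.neg_apply]
  rw [hA, hB, hC, h1, halt v, hwv, hwJv]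
  rcases hne with ha | hb | hw
  · nlinarith [mul_pos (mul_pos (mul_self_pos.mpr ha) hlam) hvv,
      mul_nonneg (mul_nonneg (mul_self_nonneg b) (inv_pos.mpr hlam).le) hvv.le]
  · nlinarith [mul_pos (mul_pos (mul_self_pos.mpr hb) (inv_pos.mpr hlam)) hvv,
      mul_nonneg (mul_nonneg (mul_self_nonneg a) hlam.le) hvv.le]
  · nlinarith [hJpos w hw, mul_nonneg (mul_nonneg (mul_self_nonneg a) hlam.le) hvv.le,
      mul_nonneg (mul_nonneg (mul_self_nonneg b) (inv_pos.mpr hlam).le) hvv.le]
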